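/- Let m, n be positive integers and let C be a Hermitian complex matrix with rows and columns indexed by Fin m × Fin n. Then the quantum optimal transport cost T_C is jointly convex: for all density matrices ρA, σA ∈ Ω_m, ρB, σB ∈ Ω_n and every real a with 0 ≤ a ≤ 1, T_C(a•ρA + (1−a)•σA, a•ρB + (1−a)•σB) ≤ a·T_C(ρA, ρB) + (1−a)·T_C(σA, σB). Moreover, if C is positive semidefinite then T_C(ρA, ρB) ≥ 0 for all ρA ∈ Ω_m and ρB ∈ Ω_n. -/

import Mathlib

open Matrix ComplexOrder

/-- A density matrix: positive semidefinite with trace one. -/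
def IsDensityMatrix {k : Type*} [Fintype k] [DecidableEq k] (ρ : Matrix k k ℂ) : Prop :=
  ρ.PosSemidef ∧ ρ.trace = 1

/-- Partial trace over the second factor. -/
noncomputable def trB {m n : ℕ} (R : Matrix (Fin m × Fin n) (Fin m × Fin n) ℂ) :
    Matrix (Fin m) (Fin m) ℂ :=
  Matrix.of fun i j => ∑ p, R (i, p) (j, p)

/-- Partial trace over the first factor. -/
noncomputable def trA {m n : ℕ} (R : Matrix (Fin m × Fin n) (Fin m × Fin n) ℂ) :
    Matrix (Fin n) (Fin n) ℂ :=
  Matrix.of fun p q => ∑ i, R (i, p) (i, q)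

/-- The set of quantum couplings of two density matrices. -/
def QCouplings {m n : ℕ} (ρA : Matrix (Fin m) (Fin m) ℂ) (ρB : Matrix (Fin n) (Fin n) ℂ) :
    Set (Matrix (Fin m × Fin n) (Fin m × Fin n) ℂ) :=
  {R | IsDensityMatrix R ∧ trB R = ρA ∧ trA R = ρB}

/-- The quantum optimal transport cost. -/
noncomputable def QOT {m n : ℕ} (C : Matrix (Fin m × Fin n) (Fin m × Fin n) ℂ)
    (ρA : Matrix (Fin m) (Fin m) ℂ) (ρB : Matrix (Fin n) (Fin n) ℂ) : ℝ :=
  sInf ((fun R => ((C * R).trace).re) '' QCouplings ρA ρB)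

section Aux
open Kronecker

variable {k : Type*} [Fintype k] [DecidableEq k]

open scoped MatrixOrder in
lemma psd_exists_eq_conjTranspose_mul_self {M : Matrix k k ℂ} (h : M.PosSemidef) :
    ∃ B : Matrix k k ℂ, M = Bᴴ * B := by
  obtain ⟨B, rfl⟩ := CStarAlgebra.nonneg_iff_eq_star_mul_self.mp h.nonneg
  exact ⟨B, rfl⟩

lemma diag_nonneg_of_psd {R : Matrix k k ℂ} (h : R.PosSemidef) (i : k) : 0 ≤ R i i := by
  have := h.dotProduct_mulVec_nonneg (Pi.single i 1)
  simpa [dotProduct, mulVec, Pi.single_apply, apply_ite, Finset.sum_ite_eq] using this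

lemma diag_re_le_one {R : Matrix k k ℂ} (h : R.PosSemidef) (htr : R.trace = 1) (i : k) :
    (R i i).re ≤ 1 := by
  have h1 : ∑ j, (R j j).re = 1 := by
    have : (R.trace).re = 1 := by rw [htr]; simp
    simpa [Matrix.trace, Complex.re_sum] using this
  rw [← h1]
  exact Finset.single_le_sum (fun j _ => (Complex.le_def.mp (diag_nonneg_of_psd h j)).1)
    (Finset.mem_univ i)

lemma entry_norm_le_one {R : Matrix k k ℂ} (h : R.PosSemidef) (htr : R.trace = 1) (i j : k) :
    ‖R i j‖ ≤ 1 := by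
  obtain ⟨D, rfl⟩ := psd_exists_eq_conjTranspose_mul_self h
  set u : EuclideanSpace ℂ k := (WithLp.equiv 2 _).symm (fun l => D l i) with hu
  set v : EuclideanSpace ℂ k := (WithLp.equiv 2 _).symm (fun l => D l j) with hv
  have hinner : ∀ a b : k, (inner ℂ ((WithLp.equiv 2 _).symm (fun l => D l a) : EuclideanSpace ℂ k)
      ((WithLp.equiv 2 _).symm (fun l => D l b)) : ℂ) = (Dᴴ * D) a b := by
    intro a b
    rw [EuclideanSpace.inner_eq_star_dotProduct]
    simp [Matrix.mul_apply, Matrix.conjTranspose_apply, dotProduct, mul_comm]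
  have hnorm : ∀ a : k, ‖((WithLp.equiv 2 _).symm (fun l => D l a) : EuclideanSpace ℂ k)‖ ≤ 1 := by
    intro a
    have h2 : ‖((WithLp.equiv 2 _).symm (fun l => D l a) : EuclideanSpace ℂ k)‖ ^ 2
        = ((Dᴴ * D) a a).re := by
      rw [norm_sq_eq_re_inner (𝕜 := ℂ), hinner]
      rfl
    nlinarith [norm_nonneg ((WithLp.equiv 2 _).symm (fun l => D l a) : EuclideanSpace ℂ k),
      diag_re_le_one h htr a, sq_nonneg (‖((WithLp.equiv 2 _).symm (fun l => D l a) :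
        EuclideanSpace ℂ k)‖ - 1)]
  calc ‖(Dᴴ * D) i j‖ = ‖(inner ℂ u v : ℂ)‖ := by rw [hu, hv, hinner]
    _ ≤ ‖u‖ * ‖v‖ := norm_inner_le_norm u v
    _ ≤ 1 * 1 := mul_le_mul (hnorm i) (hnorm j) (norm_nonneg _) zero_le_one
    _ = 1 := by ring

lemma trace_mul_psd_nonneg {C R : Matrix k k ℂ} (hC : C.PosSemidef) (hR : R.PosSemidef) :
    0 ≤ ((C * R).trace).re := by
  obtain ⟨B, rfl⟩ := psd_exists_eq_conjTranspose_mul_self hC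
  obtain ⟨D, rfl⟩ := psd_exists_eq_conjTranspose_mul_self hR
  have key : (Bᴴ * B * (Dᴴ * D)).trace = ((B * Dᴴ)ᴴ * (B * Dᴴ)).trace := by
    rw [Matrix.conjTranspose_mul, Matrix.conjTranspose_conjTranspose, ← Matrix.mul_assoc,
      Matrix.trace_mul_cycle]
    simp only [Matrix.mul_assoc]
  rw [key]
  have hpsd : ((B * Dᴴ)ᴴ * (B * Dᴴ)).PosSemidef := Matrix.posSemidef_conjTranspose_mul_self _
  have : 0 ≤ ((B * Dᴴ)ᴴ * (B * Dᴴ)).trace := by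
    apply Finset.sum_nonneg
    intro i _
    exact diag_nonneg_of_psd hpsd i
  exact (Complex.le_def.mp this).1

lemma conjTranspose_kron {m n : Type*} [Fintype m] [Fintype n] (A : Matrix m m ℂ)
    (B : Matrix n n ℂ) : (A ⊗ₖ B)ᴴ = Aᴴ ⊗ₖ Bᴴ := by
  ext ⟨i, p⟩ ⟨j, q⟩
  simp [conjTranspose_apply, mul_comm]

lemma kron_psd {m n : Type*} [Fintype m] [Fintype n] [DecidableEq m] [DecidableEq n]
    {A : Matrix m m ℂ} {B : Matrix n n ℂ} (hA : A.PosSemidef) (hB : B.PosSemidef) :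
    (A ⊗ₖ B).PosSemidef := by
  obtain ⟨A₁, rfl⟩ := psd_exists_eq_conjTranspose_mul_self hA
  obtain ⟨B₁, rfl⟩ := psd_exists_eq_conjTranspose_mul_self hB
  rw [Matrix.mul_kronecker_mul, ← conjTranspose_kron]
  exact Matrix.posSemidef_conjTranspose_mul_self _

lemma kron_mem_couplings {m n : ℕ} {ρA : Matrix (Fin m) (Fin m) ℂ}
    {ρB : Matrix (Fin n) (Fin n) ℂ} (hA : IsDensityMatrix ρA) (hB : IsDensityMatrix ρB) :
    ρA ⊗ₖ ρB ∈ QCouplings ρA ρB := by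
  refine ⟨⟨kron_psd hA.1 hB.1, ?_⟩, ?_, ?_⟩
  · rw [Matrix.trace_kronecker, hA.2, hB.2, mul_one]
  · ext i j
    have : ∑ p, ρA i j * ρB p p = ρA i j * ρB.trace := by
      rw [Matrix.trace, Finset.mul_sum]; rfl
    simpa [trB, hB.2] using this
  · ext p q
    have : ∑ i, ρA i i * ρB p q = ρA.trace * ρB p q := by
      rw [Matrix.trace, Finset.sum_mul]; rfl
    simpa [trA, hA.2] using this

lemma couplings_nonempty {m n : ℕ} {ρA : Matrix (Fin m) (Fin m) ℂ}
    {ρB : Matrix (Fin n) (Fin n) ℂ} (hA : IsDensityMatrix ρA) (hB : IsDensityMatrix ρB) :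
    (QCouplings ρA ρB).Nonempty :=
  ⟨ρA ⊗ₖ ρB, kron_mem_couplings hA hB⟩

lemma bddBelow_qot {m n : ℕ} (C : Matrix (Fin m × Fin n) (Fin m × Fin n) ℂ)
    (ρA : Matrix (Fin m) (Fin m) ℂ) (ρB : Matrix (Fin n) (Fin n) ℂ) :
    BddBelow ((fun R => ((C * R).trace).re) '' QCouplings ρA ρB) := by
  refine ⟨-(∑ p, ∑ q, ‖C p q‖), ?_⟩
  rintro x ⟨R, ⟨⟨hRpsd, hRtr⟩, -, -⟩, rfl⟩
  have hbound : ‖(C * R).trace‖ ≤ ∑ p, ∑ q, ‖C p q‖ := by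
    calc ‖(C * R).trace‖ = ‖∑ p, ∑ q, C p q * R q p‖ := by
          simp [Matrix.trace, Matrix.mul_apply]
      _ ≤ ∑ p, ∑ q, ‖C p q * R q p‖ := by
          refine (norm_sum_le _ _).trans (Finset.sum_le_sum fun p _ => norm_sum_le _ _)
      _ ≤ ∑ p, ∑ q, ‖C p q‖ := by
          refine Finset.sum_le_sum fun p _ => Finset.sum_le_sum fun q _ => ?_
          rw [norm_mul]
          calc ‖C p q‖ * ‖R q p‖ ≤ ‖C p q‖ * 1 :=
                mul_le_mul_of_nonneg_left (entry_norm_le_one hRpsd hRtr q p) (norm_nonneg _)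
            _ = ‖C p q‖ := mul_one _
  have h1 : -‖(C * R).trace‖ ≤ ((C * R).trace).re := by
    have := Complex.abs_re_le_norm ((C * R).trace)
    have h2 : |((C * R).trace).re| ≤ ‖(C * R).trace‖ := by
      simpa using this
    linarith [neg_abs_le (((C * R).trace).re)]
  linarith

lemma psd_real_smul {M : Matrix k k ℂ} (hM : M.PosSemidef) {a : ℝ} (ha : 0 ≤ a) :
    (a • M).PosSemidef := by
  have hsmul : a • M = (a : ℂ) • M := by
    ext i j; simp [Complex.real_smul]
  rw [hsmul]
  constructor
  · unfold Matrix.IsHermitian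
    rw [Matrix.conjTranspose_smul, hM.1.eq]
    congr 1
    simp
  · exact (hM.smul (Complex.zero_le_real.mpr ha)).2

lemma mix_mem_couplings {m n : ℕ} {ρA σA : Matrix (Fin m) (Fin m) ℂ}
    {ρB σB : Matrix (Fin n) (Fin n) ℂ} {R S : Matrix (Fin m × Fin n) (Fin m × Fin n) ℂ}
    (hR : R ∈ QCouplings ρA ρB) (hS : S ∈ QCouplings σA σB) {a : ℝ} (ha0 : 0 ≤ a) (ha1 : a ≤ 1) :
    a • R + (1 - a) • S ∈ QCouplings (a • ρA + (1 - a) • σA) (a • ρB + (1 - a) • σB) := by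
  obtain ⟨⟨hRpsd, hRtr⟩, hRB, hRA⟩ := hR
  obtain ⟨⟨hSpsd, hStr⟩, hSB, hSA⟩ := hS
  refine ⟨⟨(psd_real_smul hRpsd ha0).add (psd_real_smul hSpsd (by linarith)), ?_⟩, ?_, ?_⟩
  · rw [Matrix.trace_add, Matrix.trace_smul, Matrix.trace_smul, hRtr, hStr]
    simp
  · rw [← hRB, ← hSB]
    ext i j
    simp [trB, Finset.sum_add_distrib, Finset.smul_sum]
  · rw [← hRA, ← hSA]
    ext p q
    simp [trA, Finset.sum_add_distrib, Finset.smul_sum]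

lemma cost_mix {m n : ℕ} (C : Matrix (Fin m × Fin n) (Fin m × Fin n) ℂ)
    (R S : Matrix (Fin m × Fin n) (Fin m × Fin n) ℂ) (a : ℝ) :
    ((C * (a • R + (1 - a) • S)).trace).re =
      a * ((C * R).trace).re + (1 - a) * ((C * S).trace).re := by
  have h1 : ∀ b : ℝ, ∀ T : Matrix (Fin m × Fin n) (Fin m × Fin n) ℂ,
      C * (b • T) = b • (C * T) := fun b T => Matrix.mul_smul C b T
  rw [Matrix.mul_add, h1, h1, Matrix.trace_add, Matrix.trace_smul, Matrix.trace_smul]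
  simp [Complex.real_smul]

end Aux

/-- joint convexity of the quantum optimal transport cost, and
nonnegativity when the cost matrix is positive semidefinite. -/
theorem qot_convex_and_nonneg (m n : ℕ) (hm : 0 < m) (hn : 0 < n)
    (C : Matrix (Fin m × Fin n) (Fin m × Fin n) ℂ) (hC : C.IsHermitian) :
    (∀ (ρA σA : Matrix (Fin m) (Fin m) ℂ) (ρB σB : Matrix (Fin n) (Fin n) ℂ),
      IsDensityMatrix ρA → IsDensityMatrix σA → IsDensityMatrix ρB → IsDensityMatrix σB →
      ∀ a : ℝ, 0 ≤ a → a ≤ 1 →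
        QOT C (a • ρA + (1 - a) • σA) (a • ρB + (1 - a) • σB) ≤
          a * QOT C ρA ρB + (1 - a) * QOT C σA σB) ∧
    (C.PosSemidef →
      ∀ (ρA : Matrix (Fin m) (Fin m) ℂ) (ρB : Matrix (Fin n) (Fin n) ℂ),
        IsDensityMatrix ρA → IsDensityMatrix ρB → 0 ≤ QOT C ρA ρB) := by
  constructor
  · intro ρA σA ρB σB hρA hσA hρB hσB a ha0 ha1
    refine le_of_forall_pos_le_add fun ε hε => ?_
    obtain ⟨x1, ⟨R1, hR1, rfl⟩, hx1⟩ := Real.lt_sInf_add_pos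
      ((couplings_nonempty hρA hρB).image _) hε
    obtain ⟨x2, ⟨R2, hR2, rfl⟩, hx2⟩ := Real.lt_sInf_add_pos
      ((couplings_nonempty hσA hσB).image _) hε
    have hmem := mix_mem_couplings hR1 hR2 ha0 ha1
    have hle : QOT C (a • ρA + (1 - a) • σA) (a • ρB + (1 - a) • σB) ≤
        ((C * (a • R1 + (1 - a) • R2)).trace).re :=
      csInf_le (bddBelow_qot C _ _) ⟨_, hmem, rfl⟩
    rw [cost_mix] at hle
    have h1 : a * ((C * R1).trace).re ≤ a * (QOT C ρA ρB + ε) :=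
      mul_le_mul_of_nonneg_left hx1.le ha0
    have h2 : (1 - a) * ((C * R2).trace).re ≤ (1 - a) * (QOT C σA σB + ε) :=
      mul_le_mul_of_nonneg_left hx2.le (by linarith)
    unfold QOT at *
    nlinarith
  · intro hCpsd ρA ρB hρA hρB
    apply Real.sInf_nonneg
    rintro x ⟨R, ⟨⟨hRpsd, -⟩, -, -⟩, rfl⟩
    exact trace_mul_psd_nonneg hCpsd hRpsd
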